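/- Let J^i_j : U → ℝ (1 ≤ i, j ≤ 6) be differentiable functions with J^1_1 = 0, and let b, c : U → ℝ be differentiable. Suppose the identity b·c·Σ_{k,s} g^{ks} J^l_s ∂g^{ij}/∂u^k - b²·Σ_k g^{kl} ∂g^{ij}/∂u^k + c·Σ_{k,s} (∂b/∂u^k) g^{ks} J^l_s g^{ij} - b·Σ_k (∂b/∂u^k) g^{kl} g^{ij} = 0 holds on U for the index choices (i, j, l) = (1, 1, 1) and (i, j, l) = (2, 2, 1). Then b ≡ 0 on U. -/

import Mathlib

open Real

noncomputable section

/-- The `k`-th partial derivative of a function `f : ℝ⁶ → ℝ` at a point `x`. -/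
def pder {n : ℕ} (k : Fin n) (f : (Fin n → ℝ) → ℝ) (x : Fin n → ℝ) : ℝ :=
  fderiv ℝ f x (Pi.single k 1)

/-- The spherical coordinates domain `U = (0,π)⁵ × (0,2π) ⊆ ℝ⁶`. -/
def sphDomain : Set (Fin 6 → ℝ) :=
  {x | (∀ i : Fin 6, (i : ℕ) < 5 → x i ∈ Set.Ioo 0 π) ∧ x 5 ∈ Set.Ioo 0 (2 * π)}

/-- The components `g^{ij}` of the inverse round metric of `S⁶` in spherical coordinates
(indices `0,…,5` correspond to `1,…,6`): `g^{ij} = 0` for `i ≠ j` and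
`g^{ii} = 1/(sin²(u¹)⋯sin²(u^{i-1}))`. -/
def ginv (i j : Fin 6) (x : Fin 6 → ℝ) : ℝ :=
  if i = j then (∏ m ∈ Finset.univ.filter (fun m : Fin 6 => m < i), Real.sin (x m) ^ 2)⁻¹ else 0

lemma ginv_off (k s : Fin 6) (h : k ≠ s) (x : Fin 6 → ℝ) : ginv k s x = 0 := if_neg h

lemma ginv00 : ginv 0 0 = fun _ => (1:ℝ) := by
  funext x
  have h : Finset.univ.filter (fun m : Fin 6 => m < (0:Fin 6)) = ∅ := by decide
  unfold ginv
  rw [if_pos rfl, h, Finset.prod_empty, inv_one]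

lemma ginv11 : ginv 1 1 = fun x => ((Real.sin (x 0))^2)⁻¹ := by
  funext x
  have h : Finset.univ.filter (fun m : Fin 6 => m < (1:Fin 6)) = {0} := by decide
  unfold ginv
  rw [if_pos rfl, h, Finset.prod_singleton]

lemma pder_ginv00 (k : Fin 6) (x : Fin 6 → ℝ) : pder k (ginv 0 0) x = 0 := by
  simp [pder, ginv00]

lemma hasFDeriv_g11 (x : Fin 6 → ℝ) (hx : Real.sin (x 0) ≠ 0) :
    HasFDerivAt (ginv 1 1)
      ((-(2 * Real.sin (x 0) ^ 1 * Real.cos (x 0)) / (Real.sin (x 0)^2)^2) •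
        (ContinuousLinearMap.proj 0 : (Fin 6 → ℝ) →L[ℝ] ℝ)) x := by
  rw [ginv11]
  have h1 : HasDerivAt (fun t => ((Real.sin t)^2)⁻¹)
      (-(2 * Real.sin (x 0) ^ 1 * Real.cos (x 0)) / ((Real.sin (x 0))^2)^2) (x 0) := by
    have := ((Real.hasDerivAt_sin (x 0)).pow 2).inv (pow_ne_zero 2 hx)
    refine this.congr_deriv ?_
    simp
  have h2 : HasFDerivAt (fun y : Fin 6 → ℝ => y 0)
      (ContinuousLinearMap.proj 0 : (Fin 6 → ℝ) →L[ℝ] ℝ) x :=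
    hasFDerivAt_apply 0 x
  have h3 := h1.comp_hasFDerivAt x h2
  exact h3

lemma pder_g11 (k : Fin 6) (x : Fin 6 → ℝ) (hx : Real.sin (x 0) ≠ 0) :
    pder k (ginv 1 1) x =
      (-(2 * Real.sin (x 0) * Real.cos (x 0)) / (Real.sin (x 0)^2)^2) * (if k = 0 then 1 else 0) := by
  rw [pder, (hasFDeriv_g11 x hx).fderiv]
  simp [Pi.single_apply, eq_comm]

/-- If the symmetrised integrability identity of Theorem 3.1 holds on `U` for the index
choices `(i,j,l) = (1,1,1)` and `(2,2,1)` (here `0`-indexed: `(0,0,0)` and `(1,1,0)`),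
then `b ≡ 0` on `U`. -/
theorem b_vanishes (J : Fin 6 → Fin 6 → (Fin 6 → ℝ) → ℝ)
    (hJdiff : ∀ i j : Fin 6, ∀ x ∈ sphDomain, DifferentiableAt ℝ (J i j) x)
    (hJ11 : ∀ x ∈ sphDomain, J 0 0 x = 0)
    (b c : (Fin 6 → ℝ) → ℝ)
    (hb : ∀ x ∈ sphDomain, DifferentiableAt ℝ b x)
    (hc : ∀ x ∈ sphDomain, DifferentiableAt ℝ c x)
    (hid : ∀ i j l : Fin 6, ((i, j, l) = (0, 0, 0) ∨ (i, j, l) = (1, 1, 0)) →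
      ∀ x ∈ sphDomain,
        b x * c x * (∑ k : Fin 6, ∑ s : Fin 6, ginv k s x * J l s x * pder k (ginv i j) x)
        - (b x) ^ 2 * (∑ k : Fin 6, ginv k l x * pder k (ginv i j) x)
        + c x * (∑ k : Fin 6, ∑ s : Fin 6, pder k b x * ginv k s x * J l s x * ginv i j x)
        - b x * (∑ k : Fin 6, pder k b x * ginv k l x * ginv i j x) = 0) :
    ∀ x ∈ sphDomain, b x = 0 := by
  have g00 : ∀ y : Fin 6 → ℝ, ginv 0 0 y = 1 := fun y => by rw [ginv00]
  have key : ∀ x ∈ sphDomain, Real.cos (x 0) ≠ 0 → b x = 0 := by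
    intro x hx hcos
    have hx0 : x 0 ∈ Set.Ioo 0 π := hx.1 0 (by norm_num)
    have hsin : Real.sin (x 0) ≠ 0 := ne_of_gt (Real.sin_pos_of_pos_of_lt_pi hx0.1 hx0.2)
    have E1 := hid 0 0 0 (Or.inl rfl) x hx
    have E2 := hid 1 1 0 (Or.inr rfl) x hx
    simp only [Fin.sum_univ_six, pder_ginv00, g00, hJ11 x hx] at E1 E2
    rw [pder_g11 0 x hsin, pder_g11 1 x hsin, pder_g11 2 x hsin, pder_g11 3 x hsin,
      pder_g11 4 x hsin, pder_g11 5 x hsin] at E2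
    simp [ginv_off] at E1 E2
    have hb2 : b x ^ 2 * (-(2 * Real.sin (x 0) * Real.cos (x 0)) / (Real.sin (x 0)^2)^2) = 0 := by
      linear_combination ginv 1 1 x * E1 - E2
    have hdne : (-(2 * Real.sin (x 0) * Real.cos (x 0)) / (Real.sin (x 0)^2)^2) ≠ 0 := by
      apply div_ne_zero
      · simp [hsin, hcos]
      · positivity
    have := (mul_eq_zero.1 hb2).resolve_right hdne
    exact pow_eq_zero_iff (n := 2) (by norm_num) |>.1 this
  intro x hx
  by_cases hcos : Real.cos (x 0) ≠ 0
  · exact key x hx hcos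
  push_neg at hcos
  have hx0 : x 0 ∈ Set.Ioo 0 π := hx.1 0 (by norm_num)
  have hpi2 : x 0 = π / 2 := by
    apply Real.injOn_cos ⟨le_of_lt hx0.1, le_of_lt hx0.2⟩
      ⟨by positivity, by linarith [Real.pi_pos]⟩
    rw [hcos, Real.cos_pi_div_two]
  set v : ℕ → ℝ := fun n => x 0 + 1 / (n + 2) with hv
  have hvpos : ∀ n : ℕ, 0 < 1 / ((n : ℝ) + 2) := fun n => by positivity
  have hvle : ∀ n : ℕ, 1 / ((n : ℝ) + 2) ≤ 1 / 2 := by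
    intro n
    apply one_div_le_one_div_of_le <;> [norm_num; (push_cast; linarith [Nat.cast_nonneg (α := ℝ) n])]
  have hmem : ∀ n : ℕ, Function.update x 0 (v n) ∈ sphDomain := by
    intro n
    constructor
    · intro i hi
      by_cases h : i = 0
      · subst h
        rw [Function.update_self]
        constructor
        · have := hvpos n; simp only [hv]; linarith [hx0.1]
        · simp only [hv, hpi2]
          have := hvle n
          linarith [Real.pi_gt_three]
      · rw [Function.update_of_ne h]
        exact hx.1 i hi
    · rw [Function.update_of_ne (by decide)]
      exact hx.2
  have hcosn : ∀ n : ℕ, Real.cos (Function.update x 0 (v n) 0) ≠ 0 := by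
    intro n
    rw [Function.update_self]
    apply ne_of_lt
    apply Real.cos_neg_of_pi_div_two_lt_of_lt
    · simp only [hv, hpi2]; linarith [hvpos n]
    · simp only [hv, hpi2]
      have := hvle n
      linarith [Real.pi_gt_three]
  have hbn : ∀ n : ℕ, b (Function.update x 0 (v n)) = 0 := fun n =>
    key _ (hmem n) (hcosn n)
  have htend : Filter.Tendsto (fun n : ℕ => Function.update x 0 (v n)) Filter.atTop (nhds x) := by
    rw [tendsto_pi_nhds]
    intro i
    by_cases h : i = 0
    · subst h
      simp only [Function.update_self, hv]
      have h3 : Filter.Tendsto (fun n : ℕ => ((n:ℝ) + 2)) Filter.atTop Filter.atTop :=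
        Filter.tendsto_atTop_add_const_right _ 2 tendsto_natCast_atTop_atTop
      have : Filter.Tendsto (fun n : ℕ => 1 / ((n : ℝ) + 2)) Filter.atTop (nhds 0) := by
        have h4 := h3.inv_tendsto_atTop
        simp only [one_div]; exact h4
      simpa using (tendsto_const_nhds (x := x 0)).add this
    · simp only [Function.update_of_ne h]
      exact tendsto_const_nhds
  have hcont := (hb x hx).continuousAt
  have h1 : Filter.Tendsto (fun n : ℕ => b (Function.update x 0 (v n))) Filter.atTop (nhds (b x)) :=
    hcont.tendsto.comp htend
  have h2 : Filter.Tendsto (fun n : ℕ => b (Function.update x 0 (v n))) Filter.atTop (nhds 0) := by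
    simp only [hbn]; exact tendsto_const_nhds
  exact tendsto_nhds_unique h1 h2

end
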